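/- Suppose {X_α, φ_{βα}} is a strong Mittag-Leffler inverse system of uniform spaces and f_α : X_α → Y are compatible maps into a fixed uniform space Y (i.e., f_α ∘ φ_{βα} = f_β for β ≥ α), each of which has chain lifting. Then the induced map f = lim f_α : lim X_α → Y has chain lifting. -/

import Mathlib

open Filter Set

universe u v

section Chains

variable {X : Type u} {Y : Type v}

/-- `c` is an `E`-chain: consecutive members of the list lie in `E`. -/
def IsEChain (E : Set (X × X)) (c : List X) : Prop :=
  c.Chain' (fun a b => (a, b) ∈ E)

/-- Two chains (necessarily of the same length) are `E`-close. -/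
def EClose (E : Set (X × X)) (c d : List X) : Prop :=
  List.Forall₂ (fun a b => (a, b) ∈ E) c d

variable [UniformSpace X] [UniformSpace Y]

/-- `f` generates the uniform structure on `Y`: it is uniformly continuous,
surjective, and images of entourages are entourages. -/
def GeneratesUS (f : X → Y) : Prop :=
  UniformContinuous f ∧ Function.Surjective f ∧
    ∀ E ∈ uniformity X, Prod.map f f '' E ∈ uniformity Y

/-- `f` has chain lifting. -/
def ChainLifting (f : X → Y) : Prop :=
  ∀ E ∈ uniformity X, ∃ F ∈ uniformity X, ∀ x : X, ∀ c : List Y,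
    IsEChain (Prod.map f f '' F) c → c.head? = some (f x) →
      ∃ d : List X, IsEChain E d ∧ d.head? = some x ∧ d.map f = c

/-- `f` has uniqueness of chain lifts. -/
def UniqueChainLifts (f : X → Y) : Prop :=
  ∀ E ∈ uniformity X, ∃ F ∈ uniformity X, F ⊆ E ∧ ∀ c d : List X,
    IsEChain F c → IsEChain F d → c.head? = d.head? → c.map f = d.map f → c = d

/-- `f` has approximate uniqueness of chain lifts. -/
def ApproxUniqueChainLifts (f : X → Y) : Prop :=
  ∀ E ∈ uniformity X, ∃ F ∈ uniformity X, F ⊆ E ∧ ∀ c d : List X,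
    IsEChain F c → IsEChain F d → c.head? = d.head? → c.map f = d.map f → EClose E c d

/-- `f` has strong approximate uniqueness of chain lifts. -/
def StrongApproxUniqueChainLifts (f : X → Y) : Prop :=
  ∀ E ∈ uniformity X, ∃ F ∈ uniformity X, F ⊆ E ∧ ∀ c d : List X,
    IsEChain F c → IsEChain F d → c.head? = d.head? → c.map f = d.map f → EClose F c d

/-- `f` is a uniform covering map. -/
def IsUCM (f : X → Y) : Prop :=
  GeneratesUS f ∧ ChainLifting f ∧ UniqueChainLifts f

/-- `h` has `F`-bounded fibers. -/
def BoundedFibers {Z : Type*} (F : Set (X × X)) (h : X → Z) : Prop :=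
  ∀ a b : X, h a = h b → (a, b) ∈ F

/-- `f` has complete fibers (each fiber, with the subspace uniformity, is complete). -/
def CompleteFibers (f : X → Y) : Prop :=
  ∀ y : Y, IsComplete (f ⁻¹' {y})

/-- `f` is approximated by uniform covering maps. -/
def ApproxByUCMs (f : X → Y) : Prop :=
  ∀ E ∈ uniformity X, ∃ F ∈ uniformity X, F ⊆ E ∧
    ∃ (Z : Type (max u v)) (_ : UniformSpace Z) (h : X → Z) (g : Z → Y),
      (∀ x, g (h x) = f x) ∧ IsUCM g ∧ BoundedFibers F h

end Chains

/-- An inverse system of uniform spaces over a preordered index set, with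
uniformly continuous bonding maps `bond i j h : Xs j → Xs i` for `i ≤ j`. -/
structure InvSys (ι : Type*) [Preorder ι] (Xs : ι → Type*)
    [∀ i, UniformSpace (Xs i)] where
  bond : ∀ i j, i ≤ j → Xs j → Xs i
  uc : ∀ i j (h : i ≤ j), UniformContinuous (bond i j h)
  bond_self : ∀ i (x : Xs i), bond i i le_rfl x = x
  bond_comp : ∀ i j k (hij : i ≤ j) (hjk : j ≤ k) (x : Xs k),
    bond i j hij (bond j k hjk x) = bond i k (hij.trans hjk) x

/-- The inverse limit (the set of threads), carrying the inverse limit uniformity: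
the subspace uniformity of the product uniformity, whose basic entourages are
preimages of entourages under the projections (since the index set is directed). -/
abbrev InvLim {ι : Type*} [Preorder ι] {Xs : ι → Type*} [∀ i, UniformSpace (Xs i)]
    (S : InvSys ι Xs) : Type _ :=
  { x : ∀ i, Xs i // ∀ i j (h : i ≤ j), S.bond i j h (x j) = x i }

/-- The strong Mittag-Leffler property of an inverse system. -/
def StrongML {ι : Type*} [Preorder ι] {Xs : ι → Type*} [∀ i, UniformSpace (Xs i)]
    (S : InvSys ι Xs) : Prop :=
  ∀ i : ι, ∃ j : ι, ∃ h : i ≤ j,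
    Set.range (S.bond i j h) = Set.range (fun x : InvLim S => x.1 i)


private lemma exists_lift_list {X Z : Type*} (p : Z → X) :
    ∀ (e : List X), (∀ a ∈ e, ∃ z, p z = a) →
      ∃ d : List Z, List.Forall₂ (fun z a => p z = a) d e := by
  intro e he
  induction e with
  | nil => exact ⟨[], List.Forall₂.nil⟩
  | cons a t ih =>
    obtain ⟨z, hz⟩ := he a (List.mem_cons_self)
    obtain ⟨d, hd⟩ := ih (fun b hb => he b (List.mem_cons_of_mem a hb))
    exact ⟨z :: d, List.Forall₂.cons hz hd⟩

private lemma forall₂_map_eq {X Z : Type*} {p : Z → X} :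
    ∀ {d : List Z} {e : List X}, List.Forall₂ (fun z a => p z = a) d e → d.map p = e := by
  intro d e h
  induction h with
  | nil => rfl
  | cons h _ ih => simp [ih, h]

/-- If each compatible map `f_α : X_α → Y` of a strong Mittag-Leffler inverse
system has chain lifting, then the induced map from the inverse limit has chain
lifting. -/
theorem invLim_chainLifting
    {ι : Type*} [Preorder ι] [IsDirected ι (· ≤ ·)] [Nonempty ι]
    {Xs : ι → Type*} [∀ i, UniformSpace (Xs i)]
    {Y : Type*} [UniformSpace Y]
    (S : InvSys ι Xs) (hml : StrongML S)
    (fι : ∀ i, Xs i → Y)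
    (hcompat : ∀ i j (h : i ≤ j) (x : Xs j), fι i (S.bond i j h x) = fι j x)
    (hcl : ∀ i, ChainLifting (fι i))
    (f : InvLim S → Y)
    (hf : ∀ (i : ι) (x : InvLim S), f x = fι i (x.1 i)) :
    ChainLifting f := by
  intro E hE
  -- The uniformity on the inverse limit as an infimum over projections.
  have h1 : uniformity (InvLim S) = ⨅ i, Filter.comap
      (fun p : InvLim S × InvLim S => (p.1.1 i, p.2.1 i)) (uniformity (Xs i)) := by
    rw [uniformity_subtype, Pi.uniformity]
    simp only [Filter.comap_iInf, Filter.comap_comap]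
    rfl
  have key : ∀ a c (h : a ≤ c),
      Filter.comap (fun p : InvLim S × InvLim S => (p.1.1 c, p.2.1 c)) (uniformity (Xs c)) ≤
      Filter.comap (fun p : InvLim S × InvLim S => (p.1.1 a, p.2.1 a)) (uniformity (Xs a)) := by
    intro a c h
    have h2 : (fun p : InvLim S × InvLim S => (p.1.1 a, p.2.1 a)) =
        (fun q : Xs c × Xs c => (S.bond a c h q.1, S.bond a c h q.2)) ∘
          (fun p : InvLim S × InvLim S => (p.1.1 c, p.2.1 c)) := by
      funext p
      simp [Function.comp, p.1.2 a c h, p.2.2 a c h]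
    rw [h2, ← Filter.comap_comap]
    exact Filter.comap_mono (Filter.tendsto_iff_comap.mp (S.uc a c h))
  -- Find a basic entourage inside E.
  obtain ⟨i, Ei, hEi, hsub⟩ : ∃ i, ∃ Ei ∈ uniformity (Xs i),
      (fun p : InvLim S × InvLim S => (p.1.1 i, p.2.1 i)) ⁻¹' Ei ⊆ E := by
    rw [h1] at hE
    have hdir : Directed (· ≥ ·) (fun i => Filter.comap
        (fun p : InvLim S × InvLim S => (p.1.1 i, p.2.1 i)) (uniformity (Xs i))) := by
      intro a b
      obtain ⟨c, hac, hbc⟩ := directed_of (· ≤ ·) a b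
      exact ⟨c, key a c hac, key b c hbc⟩
    obtain ⟨i, hi⟩ := (Filter.mem_iInf_of_directed hdir E).mp hE
    obtain ⟨Ei, hEi, hsub⟩ := Filter.mem_comap.mp hi
    exact ⟨i, Ei, hEi, hsub⟩
  obtain ⟨j, hij, hrange⟩ := hml i
  -- entourage of Xs j pulled back from Ei
  have hE'mem : (fun q : Xs j × Xs j => (S.bond i j hij q.1, S.bond i j hij q.2)) ⁻¹' Ei
      ∈ uniformity (Xs j) := (S.uc i j hij) hEi
  obtain ⟨Fj, hFj, hlift⟩ := hcl j _ hE'mem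
  refine ⟨(fun p : InvLim S × InvLim S => (p.1.1 j, p.2.1 j)) ⁻¹' Fj, ?_, ?_⟩
  · rw [h1]
    exact Filter.mem_iInf_of_mem j (Filter.preimage_mem_comap hFj)
  · intro x c hc hhead
    -- the chain c is a chain for fι j
    have himg : Prod.map f f '' ((fun p : InvLim S × InvLim S => (p.1.1 j, p.2.1 j)) ⁻¹' Fj)
        ⊆ Prod.map (fι j) (fι j) '' Fj := by
      rintro _ ⟨⟨a, b⟩, hab, rfl⟩
      exact ⟨(a.1 j, b.1 j), hab, by simp [Prod.map, hf j]⟩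
    have hc' : IsEChain (Prod.map (fι j) (fι j) '' Fj) c :=
      List.IsChain.imp (fun a b hab => himg hab) hc
    have hhead' : c.head? = some (fι j (x.1 j)) := by rw [hhead, hf j x]
    obtain ⟨d', hd'chain, hd'head, hd'map⟩ := hlift (x.1 j) c hc' hhead'
    obtain ⟨b, t', rfl⟩ : ∃ b t', d' = b :: t' := by
      cases d' with
      | nil => simp at hd'head
      | cons b t' => exact ⟨b, t', rfl⟩
    have hb : b = x.1 j := by simpa using hd'head
    subst hb
    have hemem : ∀ a ∈ List.map (S.bond i j hij) t', ∃ z : InvLim S, z.1 i = a := by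
      intro a ha
      rw [List.mem_map] at ha
      obtain ⟨w, _, rfl⟩ := ha
      have : S.bond i j hij w ∈ Set.range (fun z : InvLim S => z.1 i) := by
        rw [← hrange]; exact ⟨w, rfl⟩
      exact this
    obtain ⟨dt, hdt⟩ := exists_lift_list (fun z : InvLim S => z.1 i)
      (List.map (S.bond i j hij) t') hemem
    have hd2 : List.Forall₂ (fun (z : InvLim S) a => z.1 i = a) (x :: dt)
        (List.map (S.bond i j hij) (x.1 j :: t')) :=
      List.Forall₂.cons (x.2 i j hij).symm hdt
    have hmap : (x :: dt).map (fun z : InvLim S => z.1 i)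
        = List.map (S.bond i j hij) (x.1 j :: t') := forall₂_map_eq hd2
    refine ⟨x :: dt, ?_, rfl, ?_⟩
    · have hechain : (List.map (S.bond i j hij) (x.1 j :: t')).Chain'
          (fun a b => (a, b) ∈ Ei) := by
        unfold List.Chain'; rw [List.isChain_map]
        exact hd'chain
      have : (x :: dt).Chain' (fun u v : InvLim S => ((u.1 i, v.1 i) : Xs i × Xs i) ∈ Ei) := by
        have h5 := (List.isChain_map (R := fun a b : Xs i => (a, b) ∈ Ei)
          (fun z : InvLim S => z.1 i) (l := x :: dt)).mp
        apply h5
        rw [hmap]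
        exact hechain
      unfold List.Chain' at this; exact List.IsChain.imp (fun u v huv => hsub huv) this
    · have h3 : (x :: dt).map f = ((x :: dt).map (fun z : InvLim S => z.1 i)).map (fι i) := by
        rw [List.map_map]
        exact List.map_congr_left (fun z _ => hf i z)
      rw [h3, hmap, List.map_map]
      have h4 : (fι i ∘ S.bond i j hij) = fι j := funext (hcompat i j hij)
      rw [h4, hd'map]
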